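/- Let A = ⊕_{i≥0} A_i be a nonnegatively graded k-algebra and let a_1, ..., a_n ∈ A be nonzero elements. Let B be the subalgebra generated by a_1, ..., a_n and B_gr the subalgebra generated by their lowest homogeneous components gr(a_1), ..., gr(a_n). If each monomial p in n variables satisfies that p(gr(a_1),...,gr(a_n)) ≠ 0 implies gr(p(a_1,...,a_n)) = p(gr(a_1),...,gr(a_n)), then dim_k B_gr ≤ dim_k B. -/

import Mathlib

open scoped DirectSum

/-- The lowest nonzero homogeneous component of an element of a graded algebra
(`0` if the element is zero). -/
noncomputable def grLowest {k A : Type*} [Field k] [Ring A] [Algebra k A]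
    (𝒜 : ℕ → Submodule k A) [GradedAlgebra 𝒜] (a : A) : A := by
  classical
  exact if h : ∃ i, (DirectSum.decompose 𝒜 a i : A) ≠ 0
    then (DirectSum.decompose 𝒜 a (Nat.find h) : A) else 0

section aux
variable {k A : Type*} [Field k] [Ring A] [Algebra k A]
  (𝒜 : ℕ → Submodule k A) [GradedAlgebra 𝒜]

noncomputable def grProj (d : ℕ) : A →ₗ[k] A :=
  (𝒜 d).subtype ∘ₗ (DirectSum.component k ℕ (fun i => 𝒜 i) d) ∘ₗ
    (DirectSum.decomposeLinearEquiv 𝒜).toLinearMap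

lemma grProj_apply (d : ℕ) (b : A) :
    grProj 𝒜 d b = (DirectSum.decompose 𝒜 b d : A) := rfl

lemma gr_exists {b : A} (hb : b ≠ 0) : ∃ i, (DirectSum.decompose 𝒜 b i : A) ≠ 0 := by
  classical
  by_contra h
  push_neg at h
  apply hb
  rw [← DirectSum.sum_support_decompose 𝒜 b]
  exact Finset.sum_eq_zero fun i _ => h i

lemma grLowest_spec {b : A} (hb : b ≠ 0) :
    ∃ d : ℕ, grLowest 𝒜 b = (DirectSum.decompose 𝒜 b d : A) ∧ grLowest 𝒜 b ≠ 0 ∧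
      ∀ e < d, (DirectSum.decompose 𝒜 b e : A) = 0 := by
  classical
  have h := gr_exists 𝒜 hb
  refine ⟨Nat.find h, ?_, ?_, ?_⟩
  · rw [grLowest, dif_pos h]
  · rw [grLowest, dif_pos h]; exact Nat.find_spec h
  · intro e he
    have := Nat.find_min h he
    simpa using this

lemma grLowest_zero : grLowest 𝒜 (0 : A) = 0 := by
  classical
  rw [grLowest, dif_neg]
  push_neg
  intro i
  simp

open Classical in
noncomputable def grDeg (b : A) : ℕ :=
  if hb : b ≠ 0 then (grLowest_spec 𝒜 hb).choose else 0

lemma grDeg_spec {b : A} (hb : b ≠ 0) :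
    grLowest 𝒜 b = (DirectSum.decompose 𝒜 b (grDeg 𝒜 b) : A) ∧
      (∀ e < grDeg 𝒜 b, (DirectSum.decompose 𝒜 b e : A) = 0) := by
  classical
  rw [grDeg, dif_pos hb]
  exact ⟨(grLowest_spec 𝒜 hb).choose_spec.1, (grLowest_spec 𝒜 hb).choose_spec.2.2⟩

lemma linearIndependent_of_grLowest {ι : Type*} (b : ι → A)
    (H : LinearIndependent k fun i => grLowest 𝒜 (b i)) : LinearIndependent k b := by
  classical
  have hbne : ∀ i, b i ≠ 0 := by
    intro i hbi
    exact H.ne_zero i (by rw [hbi, grLowest_zero])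
  rw [linearIndependent_iff']
  intro s g hsum j hj
  by_contra hg
  set s' : Finset ι := s.filter (fun i => g i ≠ 0) with hs'
  have hj' : j ∈ s' := by simp [hs', hj, hg]
  have hs'ne : s'.Nonempty := ⟨j, hj'⟩
  set d : ℕ := s'.inf' hs'ne (fun i => grDeg 𝒜 (b i)) with hd
  obtain ⟨i₀, hi₀, hdeq⟩ := s'.exists_mem_eq_inf' hs'ne (fun i => grDeg 𝒜 (b i))
  have hdle : ∀ i ∈ s', d ≤ grDeg 𝒜 (b i) := fun i hi =>
    Finset.inf'_le _ hi
  -- apply projection onto degree d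
  have h2 : ∑ i ∈ s, g i • (DirectSum.decompose 𝒜 (b i) d : A) = 0 := by
    have := congrArg (grProj 𝒜 d) hsum
    simpa [map_sum, map_smul, grProj_apply] using this
  -- restrict to s'
  have h3 : ∑ i ∈ s', g i • (DirectSum.decompose 𝒜 (b i) d : A) = 0 := by
    rw [← h2]
    apply Finset.sum_filter_of_ne
    intro i _ hne hgi
    exact hne (by rw [hgi, zero_smul])
  set s'' : Finset ι := s'.filter (fun i => grDeg 𝒜 (b i) = d) with hs''
  have h4 : ∑ i ∈ s'', g i • grLowest 𝒜 (b i) = 0 := by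
    rw [← h3]
    rw [show (∑ i ∈ s'', g i • grLowest 𝒜 (b i)) =
        ∑ i ∈ s'', g i • (DirectSum.decompose 𝒜 (b i) d : A) from
      Finset.sum_congr rfl fun i hi => by
        rw [hs''] at hi
        rw [(grDeg_spec 𝒜 (hbne i)).1, (Finset.mem_filter.mp hi).2]]
    apply Finset.sum_filter_of_ne
    intro i hi hne
    by_contra hdeg
    have hlt : d < grDeg 𝒜 (b i) := lt_of_le_of_ne (hdle i hi) (Ne.symm hdeg)
    exact hne (by rw [(grDeg_spec 𝒜 (hbne i)).2 d hlt, smul_zero])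
  have hi₀'' : i₀ ∈ s'' := by
    rw [hs'', Finset.mem_filter]
    exact ⟨hi₀, hdeq.symm⟩
  have := linearIndependent_iff'.mp H s'' g h4 i₀ hi₀''
  exact (Finset.mem_filter.mp hi₀).2 this
end aux

lemma exists_list_map {α β : Type*} (f : α → β) (l : List β)
    (h : ∀ y ∈ l, y ∈ Set.range f) : ∃ w : List α, w.map f = l := by
  induction l with
  | nil => exact ⟨[], rfl⟩
  | cons x xs ih =>
    obtain ⟨w, hw⟩ := ih (fun y hy => h y (List.mem_cons_of_mem _ hy))
    obtain ⟨i, hi⟩ := h x List.mem_cons_self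
    exact ⟨i :: w, by simp [hw, hi]⟩

/-- Let `A` be a nonnegatively graded `k`-algebra, `a_1, …, a_n` nonzero
elements, `B` the subalgebra generated by the `a_i`, and `B_gr` the subalgebra
generated by the lowest homogeneous components `gr(a_i)`. If every
(noncommutative) monomial `p` in `n` variables satisfies
`p(gr a_1, …, gr a_n) ≠ 0 → gr (p (a_1, …, a_n)) = p (gr a_1, …, gr a_n)`,
then `dim_k B_gr ≤ dim_k B`. -/
theorem rank_adjoin_grLowest_le {k A : Type*} [Field k] [Ring A] [Algebra k A]
    (𝒜 : ℕ → Submodule k A) [GradedAlgebra 𝒜] (n : ℕ) (a : Fin n → A)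
    (ha : ∀ i, a i ≠ 0)
    (hmono : ∀ w : List (Fin n),
      (w.map fun i => grLowest 𝒜 (a i)).prod ≠ 0 →
        grLowest 𝒜 ((w.map a).prod) = (w.map fun i => grLowest 𝒜 (a i)).prod) :
    Module.rank k (Algebra.adjoin k (Set.range fun i => grLowest 𝒜 (a i)))
      ≤ Module.rank k (Algebra.adjoin k (Set.range a)) := by
  classical
  set g : Fin n → A := fun i => grLowest 𝒜 (a i) with hg
  set T : Set A := ((Submonoid.closure (Set.range g) : Submonoid A) : Set A) with hT
  obtain ⟨B, hBT, hspan, hli⟩ := exists_linearIndependent k T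
  have e1 : Module.rank k (Algebra.adjoin k (Set.range g)) = Cardinal.mk B := by
    rw [← Subalgebra.rank_toSubmodule, Algebra.adjoin_eq_span, ← hT, ← hspan,
      rank_span_set hli]
  -- for each t ∈ B choose a word
  have hw : ∀ t : B, ∃ w : List (Fin n), (w.map g).prod = (t : A) := by
    rintro ⟨t, ht⟩
    obtain ⟨l, hl1, hl2⟩ := Submonoid.exists_list_of_mem_closure (hBT ht)
    obtain ⟨w, hwl⟩ := exists_list_map g l hl1
    exact ⟨w, by rw [hwl, hl2]⟩
  set p : B → A := fun t => (((hw t).choose).map a).prod with hp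
  have htne : ∀ t : B, (t : A) ≠ 0 := fun t => hli.ne_zero t
  have hgrp : ∀ t : B, grLowest 𝒜 (p t) = (t : A) := by
    intro t
    have hne : (((hw t).choose).map g).prod ≠ 0 := by
      rw [(hw t).choose_spec]; exact htne t
    rw [hp]
    exact (hmono _ hne).trans ((hw t).choose_spec)
  have hpi : LinearIndependent k p := by
    apply linearIndependent_of_grLowest 𝒜 p
    have : (fun t : B => grLowest 𝒜 (p t)) = fun t : B => (t : A) := funext hgrp
    rw [this]
    exact hli
  have hpmem : ∀ t : B, p t ∈ Algebra.adjoin k (Set.range a) := by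
    intro t
    apply Subalgebra.list_prod_mem
    intro x hx
    obtain ⟨i, _, rfl⟩ := List.mem_map.mp hx
    exact Algebra.subset_adjoin (Set.mem_range_self i)
  set p' : B → (Algebra.adjoin k (Set.range a)) := fun t => ⟨p t, hpmem t⟩ with hp'
  have hpi' : LinearIndependent k p' := by
    apply LinearIndependent.of_comp (Algebra.adjoin k (Set.range a)).val.toLinearMap
    exact hpi
  calc Module.rank k (Algebra.adjoin k (Set.range fun i => grLowest 𝒜 (a i)))
      = Cardinal.mk B := e1
    _ ≤ Module.rank k (Algebra.adjoin k (Set.range a)) := hpi'.cardinal_le_rank
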